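/- Let K be a field and n ≥ 2. Suppose g ∈ GLₙ(K) satisfies g·U_{ij}(K)·g⁻¹ = U_{ij}(K) for every pair i ≠ j, where U_{ij}(K) = {1ₙ + t·E_{ij} : t ∈ K} is the root subgroup of elementary matrices in position (i,j). Then g is a diagonal matrix. -/

import Mathlib

open Matrix

/-- If `g ∈ GLₙ(K)` (for `K` a field, `n ≥ 2`) normalizes every root subgroup
`U_{ij}(K) = {1ₙ + t·E_{ij} : t ∈ K}` for `i ≠ j`, then `g` is diagonal. -/
theorem diagonal_of_normalizes_root_subgroups {K : Type*} [Field K] {n : ℕ} (hn : 2 ≤ n)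
    (g : GL (Fin n) K)
    (h : ∀ i j : Fin n, i ≠ j →
      (fun M : Matrix (Fin n) (Fin n) K =>
          (g : Matrix (Fin n) (Fin n) K) * M * ((g⁻¹ : GL (Fin n) K) : Matrix (Fin n) (Fin n) K)) ''
        {M : Matrix (Fin n) (Fin n) K | ∃ t : K, M = 1 + t • Matrix.single i j 1} =
      {M : Matrix (Fin n) (Fin n) K | ∃ t : K, M = 1 + t • Matrix.single i j 1}) :
    (g : Matrix (Fin n) (Fin n) K).IsDiag := by
  intro a i hne
  haveI : Nontrivial (Fin n) := Fin.nontrivial_iff_two_le.mpr hn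
  obtain ⟨j, hj⟩ := exists_ne i
  have hmem : (1 + (1:K) • Matrix.single i j 1)
      ∈ {M : Matrix (Fin n) (Fin n) K | ∃ t : K, M = 1 + t • Matrix.single i j 1} :=
    ⟨1, rfl⟩
  have hin := (h i j hj.symm) ▸ Set.mem_image_of_mem _ hmem
  obtain ⟨s, hs⟩ := hin
  set G : Matrix (Fin n) (Fin n) K := (g : Matrix (Fin n) (Fin n) K) with hG
  set A : Matrix (Fin n) (Fin n) K := Matrix.single i j 1 with hA
  have h2 : ((g⁻¹ : GL (Fin n) K) : Matrix (Fin n) (Fin n) K) * G = 1 := by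
    exact g.inv_mul
  have hE : G * A = s • (A * G) := by
    have h3 := congrArg (fun M => M * G) hs
    simp only [one_smul, mul_assoc, h2, mul_one, add_mul, one_mul, smul_mul_assoc, mul_add] at h3
    exact add_left_cancel h3
  have h4 := congrFun (congrFun hE a) j
  rw [hA, Matrix.mul_single_apply_same, Matrix.smul_apply,
    Matrix.single_mul_apply_of_ne 1 i j a j hne G, smul_zero,
    mul_one] at h4
  exact h4
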